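/- Let n ≥ 3 and j ≥ 1. Then the (F_{n,nj})th letter of S_∞ is a_n, and for each 1 ≤ u ≤ n-1 the (F_{n,nj+u})th letter of S_∞ is a_u. -/

import Mathlib

/-- Let `n ≥ 3` and `j ≥ 1`.  In the infinite `n`-string `W = S_∞`
(1-indexed: the `p`-th letter is `W (p - 1)`), the `(F (n·j))`-th letter is
`a_n` and, for `1 ≤ u ≤ n-1`, the `(F (n·j + u))`-th letter is `a_u`. -/
theorem letters_at_genFib_positions (n : ℕ) (hn : 3 ≤ n) (F : ℕ → ℕ)
    (hF1 : ∀ i, 1 ≤ i → i ≤ n → F i = 1)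
    (hFrec : ∀ m, n ≤ m → F (m + 1) = F m + F (m + 1 - n))
    (S : ℕ → List ℕ)
    (hS1 : ∀ i, 1 ≤ i → i ≤ n → S i = [i])
    (hSrec : ∀ m, n ≤ m → S (m + 1) = S m ++ S (m + 1 - n))
    (W : ℕ → ℕ)
    (hW : ∀ m, n ≤ m → S m = (List.range (S m).length).map W)
    (j : ℕ) (hj : 1 ≤ j) :
    W (F (n * j) - 1) = n ∧
    ∀ u, 1 ≤ u → u ≤ n - 1 → W (F (n * j + u) - 1) = u := by
  -- Key structural lemma: S m has length F m and its last letter is ((m-1) % n) + 1.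
  have key : ∀ m, 1 ≤ m →
      (S m).length = F m ∧ (S m).getLast? = some ((m - 1) % n + 1) := by
    intro m
    induction m using Nat.strong_induction_on with
    | _ m ih =>
      intro hm
      by_cases hle : m ≤ n
      · rw [hS1 m hm hle, hF1 m hm hle]
        refine ⟨rfl, ?_⟩
        simp only [List.getLast?_singleton, Option.some.injEq]
        have : m - 1 < n := by omega
        rw [Nat.mod_eq_of_lt this]
        omega
      · push_neg at hle
        obtain ⟨k, rfl⟩ : ∃ k, m = k + 1 := ⟨m - 1, by omega⟩
        have hk : n ≤ k := by omega
        have h1 := ih k (by omega) (by omega)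
        have h2 := ih (k + 1 - n) (by omega) (by omega)
        rw [hSrec k hk, hFrec k hk]
        constructor
        · rw [List.length_append, h1.1, h2.1]
        · rw [List.getLast?_append, h2.2]
          simp only [Option.some_or, Option.some.injEq]
          have heq : k + 1 - n - 1 = k - n := by omega
          have heq2 : k - n + n = k := by omega
          rw [heq, show k + 1 - 1 = k from rfl, ← heq2, Nat.add_mod_right,
            Nat.add_sub_cancel]
  -- Consequence: for m ≥ n, the F m - th letter of W is ((m-1) % n) + 1.
  have hW' : ∀ m, n ≤ m → W (F m - 1) = (m - 1) % n + 1 := by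
    intro m hm
    obtain ⟨hlen, hlast⟩ := key m (by omega)
    have hne : S m ≠ [] := by
      intro h; rw [h] at hlast; simp at hlast
    have hpos : 1 ≤ (S m).length := List.length_pos_iff.mpr hne
    have := hW m hm
    rw [this] at hlast
    rw [List.getLast?_map, List.getLast?_range] at hlast
    rw [if_neg (by omega)] at hlast
    simp only [Option.map_some, Option.some.injEq] at hlast
    rw [← hlen]
    exact hlast
  obtain ⟨j', rfl⟩ : ∃ j', j = j' + 1 := ⟨j - 1, by omega⟩
  have hmul : n * (j' + 1) = n * j' + n := by ring
  constructor
  · have h := hW' (n * (j' + 1)) (by omega)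
    rw [h, hmul, show n * j' + n - 1 = n * j' + (n - 1) by omega,
      Nat.mul_add_mod, Nat.mod_eq_of_lt (by omega)]
    omega
  · intro u hu1 hu2
    have h := hW' (n * (j' + 1) + u) (by omega)
    rw [h, hmul, show n * j' + n + u - 1 = n * (j' + 1) + (u - 1) by omega,
      Nat.mul_add_mod, Nat.mod_eq_of_lt (by omega)]
    omega
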